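/- Let V₁, V₂, W be real normed spaces, q₁ : V₁ → W and q₂ : V₂ → W bounded linear surjections, and L₁, L₂ extended seminorms on V₁, V₂ such that the quotient seminorm of L₁ under q₁ and of L₂ under q₂ both equal a given seminorm L_W on W (quotient seminorm of L under q is w ↦ inf{L(v) : q(v) = w}). Fix ε > 0 and define on V₁ × V₂ the seminorm L(v₁,v₂) = max(L₁(v₁), L₂(v₂), ε⁻¹·‖q₁(v₁) − q₂(v₂)‖). Then the quotient of L under the first projection (v₁,v₂) ↦ v₁ equals L₁, and the quotient under the second projection equals L₂. -/

import Mathlib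

open scoped ENNReal

lemma stmt9_aux {V : Type*} (a : ℝ≥0∞) (f g : V → ℝ≥0∞)
    (S : Set V) (hS : ∀ v ∈ S, g v = 0)
    (h : (⨅ v ∈ S, f v) ≤ a) :
    (⨅ v : V, max (max a (f v)) (g v)) = a := by
  refine le_antisymm ?_ (le_iInf fun v => le_max_of_le_left (le_max_left _ _))
  refine ENNReal.le_of_forall_pos_le_add fun δ hδ ha => ?_
  have hlt : (⨅ v ∈ S, f v) < a + δ :=
    h.trans_lt (ENNReal.lt_add_right ha.ne (by exact_mod_cast hδ.ne'))
  obtain ⟨v, hv'⟩ := iInf_lt_iff.mp hlt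
  obtain ⟨hvS, hv⟩ := iInf_lt_iff.mp hv'
  refine iInf_le_of_le v ?_
  rw [hS v hvS]
  simp only [max_le_iff]
  exact ⟨⟨le_self_add, hv.le⟩, zero_le⟩

/-- the coupling seminorm
`L(v₁,v₂) = max(L₁ v₁, L₂ v₂, ε⁻¹‖q₁ v₁ − q₂ v₂‖)` has quotient `L₁` under the first
projection and quotient `L₂` under the second projection, when `L₁` and `L₂` both have
quotient `L_W` under `q₁` and `q₂` respectively. -/
theorem stmt9 {V₁ V₂ W : Type*}
    [NormedAddCommGroup V₁] [NormedSpace ℝ V₁]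
    [NormedAddCommGroup V₂] [NormedSpace ℝ V₂]
    [NormedAddCommGroup W] [NormedSpace ℝ W]
    (q₁ : V₁ →L[ℝ] W) (q₂ : V₂ →L[ℝ] W)
    (hq₁s : Function.Surjective q₁) (hq₂s : Function.Surjective q₂)
    (L₁ : V₁ → ℝ≥0∞) (L₂ : V₂ → ℝ≥0∞) (LW : W → ℝ≥0∞)
    (hq₁ : ∀ w : W, LW w = ⨅ v ∈ {v : V₁ | q₁ v = w}, L₁ v)
    (hq₂ : ∀ w : W, LW w = ⨅ v ∈ {v : V₂ | q₂ v = w}, L₂ v)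
    (ε : ℝ) (hε : 0 < ε)
    (L : V₁ × V₂ → ℝ≥0∞)
    (hL : ∀ p : V₁ × V₂,
      L p = max (max (L₁ p.1) (L₂ p.2)) (ENNReal.ofReal (ε⁻¹ * ‖q₁ p.1 - q₂ p.2‖))) :
    (∀ v₁ : V₁, (⨅ v₂ : V₂, L (v₁, v₂)) = L₁ v₁) ∧
    (∀ v₂ : V₂, (⨅ v₁ : V₁, L (v₁, v₂)) = L₂ v₂) := by
  constructor
  · intro v₁
    simp only [hL]
    apply stmt9_aux (L₁ v₁) L₂ _ {v : V₂ | q₂ v = q₁ v₁}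
    · intro v hv
      simp only [Set.mem_setOf_eq] at hv
      simp [hv]
    · calc (⨅ v ∈ {v : V₂ | q₂ v = q₁ v₁}, L₂ v) = LW (q₁ v₁) := (hq₂ _).symm
        _ = ⨅ v ∈ {v : V₁ | q₁ v = q₁ v₁}, L₁ v := hq₁ _
        _ ≤ L₁ v₁ := iInf_le_of_le v₁ (iInf_le _ rfl)
  · intro v₂
    simp only [hL, max_comm (L₁ _)]
    apply stmt9_aux (L₂ v₂) L₁ _ {v : V₁ | q₁ v = q₂ v₂}
    · intro v hv
      simp only [Set.mem_setOf_eq] at hv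
      simp [hv]
    · calc (⨅ v ∈ {v : V₁ | q₁ v = q₂ v₂}, L₁ v) = LW (q₂ v₂) := (hq₁ _).symm
        _ = ⨅ v ∈ {v : V₂ | q₂ v = q₂ v₂}, L₂ v := hq₂ _
        _ ≤ L₂ v₂ := iInf_le_of_le v₂ (iInf_le _ rfl)
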